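/- For every natural number d, every pair of angle sequences θ, φ : {0,…,d} → ℝ, and every λ ∈ ℝ, there exist polynomials P, Q ∈ ℂ[z] with deg P ≤ d and deg Q ≤ d, satisfying |P(z)|² + |Q(z)|² = 1 for all z with |z| = 1, such that for every n ≥ 1 and every unitary matrix U ∈ M_n(ℂ), the (2n)×(2n) matrix product (∏_{j=d}^{1} (R(θ_j, φ_j, 0) ⊗ I_n) · fromBlocks(U, 0, 0, I_n)) · (R(θ_0, φ_0, λ) ⊗ I_n) (factors ordered with j = d leftmost) has top-left n×n block equal to P(U) and bottom-left n×n block equal to Q(U), where P(U) and Q(U) denote the evaluation of the polynomials at the matrix U. -/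

import Mathlib

open Complex Matrix

/-- The GQSP signal-processing rotation `R(θ, φ, λ)`. -/
noncomputable def gqspR (θ φ l : ℝ) : Matrix (Fin 2) (Fin 2) ℂ :=
  !![Complex.exp (Complex.I * (l + φ)) * Real.cos θ, Complex.exp (Complex.I * φ) * Real.sin θ;
     Complex.exp (Complex.I * l) * Real.sin θ, -(Real.cos θ : ℂ)]

/-- The Kronecker product `A ⊗ I_n` of a 2×2 matrix with the n×n identity,
written as a 2×2 block matrix of n×n blocks. -/
noncomputable def kronI (n : ℕ) (A : Matrix (Fin 2) (Fin 2) ℂ) :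
    Matrix (Fin n ⊕ Fin n) (Fin n ⊕ Fin n) ℂ :=
  Matrix.fromBlocks (A 0 0 • 1) (A 0 1 • 1) (A 1 0 • 1) (A 1 1 • 1)

/-- The GQSP matrix product
`(∏_{j=d}^{1} (R(θ_j, φ_j, 0) ⊗ I_n) · fromBlocks(U, 0, 0, I_n)) · (R(θ_0, φ_0, λ) ⊗ I_n)`,
with the factor `j = d` leftmost; `gqspProdM n θ φ l U d` is this product for degree `d`. -/
noncomputable def gqspProdM (n : ℕ) (θ φ : ℕ → ℝ) (l : ℝ) (U : Matrix (Fin n) (Fin n) ℂ) :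
    ℕ → Matrix (Fin n ⊕ Fin n) (Fin n ⊕ Fin n) ℂ
  | 0 => kronI n (gqspR (θ 0) (φ 0) l)
  | k + 1 =>
      (kronI n (gqspR (θ (k + 1)) (φ (k + 1)) 0) * Matrix.fromBlocks U 0 0 1) *
        gqspProdM n θ φ l U k

open Polynomial

lemma myBlocks₁₁ {n : ℕ} (A B C D : Matrix (Fin n) (Fin n) ℂ)
    (M : Matrix (Fin n ⊕ Fin n) (Fin n ⊕ Fin n) ℂ) :
    (Matrix.fromBlocks A B C D * M).toBlocks₁₁ = A * M.toBlocks₁₁ + B * M.toBlocks₂₁ := by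
  ext i j
  simp [Matrix.mul_apply, Matrix.toBlocks₁₁, Matrix.toBlocks₂₁, Matrix.fromBlocks,
    Fintype.sum_sum_type]

lemma myBlocks₂₁ {n : ℕ} (A B C D : Matrix (Fin n) (Fin n) ℂ)
    (M : Matrix (Fin n ⊕ Fin n) (Fin n ⊕ Fin n) ℂ) :
    (Matrix.fromBlocks A B C D * M).toBlocks₂₁ = C * M.toBlocks₁₁ + D * M.toBlocks₂₁ := by
  ext i j
  simp [Matrix.mul_apply, Matrix.toBlocks₁₁, Matrix.toBlocks₂₁, Matrix.fromBlocks,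
    Fintype.sum_sum_type]

lemma rot_normSq (c s : ℝ) (h : c ^ 2 + s ^ 2 = 1) (x y : ℂ) :
    Complex.normSq ((c : ℂ) * x + (s : ℂ) * y) + Complex.normSq ((s : ℂ) * x - (c : ℂ) * y)
      = Complex.normSq x + Complex.normSq y := by
  simp only [Complex.normSq_apply, Complex.add_re, Complex.add_im, Complex.sub_re,
    Complex.sub_im, Complex.mul_re, Complex.mul_im, Complex.ofReal_re, Complex.ofReal_im]
  ring_nf
  nlinarith [h, sq_nonneg x.re, sq_nonneg x.im]

lemma norm_sq_eq_normSq (w : ℂ) : ‖w‖ ^ 2 = Complex.normSq w := by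
  rw [Complex.sq_norm]

theorem gqsp_block_encoding (d : ℕ) (θ φ : ℕ → ℝ) (l : ℝ) :
    ∃ P Q : Polynomial ℂ, P.natDegree ≤ d ∧ Q.natDegree ≤ d ∧
      (∀ z : ℂ, ‖z‖ = 1 → ‖P.eval z‖ ^ 2 + ‖Q.eval z‖ ^ 2 = 1) ∧
      ∀ n : ℕ, 1 ≤ n → ∀ U : Matrix (Fin n) (Fin n) ℂ,
        U ∈ Matrix.unitaryGroup (Fin n) ℂ →
          (gqspProdM n θ φ l U d).toBlocks₁₁ = (Polynomial.aeval U) P ∧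
          (gqspProdM n θ φ l U d).toBlocks₂₁ = (Polynomial.aeval U) Q := by
  induction d with
  | zero =>
    refine ⟨Polynomial.C (Complex.exp (Complex.I * (l + φ 0)) * Real.cos (θ 0)),
      Polynomial.C (Complex.exp (Complex.I * l) * Real.sin (θ 0)), (Polynomial.natDegree_C _).le, (Polynomial.natDegree_C _).le, ?_, ?_⟩
    · intro z hz
      simp only [Polynomial.eval_C, norm_mul, mul_pow, Complex.norm_exp,
        Complex.norm_real, Real.norm_eq_abs, _root_.sq_abs]
      have h1 : (Complex.I * ((l : ℂ) + (φ 0 : ℂ))).re = 0 := by simp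
      have h2 : (Complex.I * (l : ℂ)).re = 0 := by simp
      rw [h1, h2, Real.exp_zero]
      simp [Real.cos_sq_add_sin_sq]
    · intro n hn U hU
      constructor
      · show (kronI n (gqspR (θ 0) (φ 0) l)).toBlocks₁₁ = _
        simp [kronI, gqspR, Polynomial.aeval_C, Algebra.algebraMap_eq_smul_one, smul_smul, mul_comm]
      · show (kronI n (gqspR (θ 0) (φ 0) l)).toBlocks₂₁ = _
        simp [kronI, gqspR, Polynomial.aeval_C, Algebra.algebraMap_eq_smul_one, smul_smul, mul_comm]
  | succ k ih =>
    obtain ⟨P, Q, hPd, hQd, hnorm, hblk⟩ := ih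
    set t := θ (k + 1) with ht
    set p := φ (k + 1) with hp
    have ha : gqspR t p 0 0 0 = Complex.exp (Complex.I * p) * Real.cos t := by
      simp [gqspR]
    have hb : gqspR t p 0 0 1 = Complex.exp (Complex.I * p) * Real.sin t := by
      simp [gqspR]
    have hc : gqspR t p 0 1 0 = (Real.sin t : ℂ) := by
      simp [gqspR]
    have hd : gqspR t p 0 1 1 = -(Real.cos t : ℂ) := by
      simp [gqspR]
    refine ⟨gqspR t p 0 0 0 • (X * P) + gqspR t p 0 0 1 • Q,
            gqspR t p 0 1 0 • (X * P) + gqspR t p 0 1 1 • Q, ?_, ?_, ?_, ?_⟩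
    · refine le_trans (natDegree_add_le _ _) (max_le ?_ ?_)
      · exact le_trans (natDegree_smul_le _ _)
          (le_trans natDegree_mul_le (by rw [Polynomial.natDegree_X]; omega))
      · exact le_trans (natDegree_smul_le _ _) (le_trans hQd (Nat.le_succ k))
    · refine le_trans (natDegree_add_le _ _) (max_le ?_ ?_)
      · exact le_trans (natDegree_smul_le _ _)
          (le_trans natDegree_mul_le (by rw [Polynomial.natDegree_X]; omega))
      · exact le_trans (natDegree_smul_le _ _) (le_trans hQd (Nat.le_succ k))
    · intro z hz
      have h1 : Complex.normSq (P.eval z) + Complex.normSq (Q.eval z) = 1 := by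
        have := hnorm z hz
        rwa [norm_sq_eq_normSq, norm_sq_eq_normSq] at this
      have hz1 : Complex.normSq z = 1 := by
        rw [← norm_sq_eq_normSq, hz]; norm_num
      have hE : Complex.normSq (Complex.exp (Complex.I * (p : ℂ))) = 1 := by
        rw [← norm_sq_eq_normSq]
        simp [Complex.norm_exp]
      simp only [Polynomial.eval_add, Polynomial.eval_smul, Polynomial.eval_mul,
        Polynomial.eval_X, smul_eq_mul, ha, hb, hc, hd, norm_sq_eq_normSq]
      have e1 : Complex.exp (Complex.I * (p : ℂ)) * (Real.cos t : ℂ) * (z * P.eval z) +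
          Complex.exp (Complex.I * (p : ℂ)) * (Real.sin t : ℂ) * Q.eval z =
          Complex.exp (Complex.I * (p : ℂ)) *
            ((Real.cos t : ℂ) * (z * P.eval z) + (Real.sin t : ℂ) * Q.eval z) := by ring
      have e2 : (Real.sin t : ℂ) * (z * P.eval z) + -(Real.cos t : ℂ) * Q.eval z =
          (Real.sin t : ℂ) * (z * P.eval z) - (Real.cos t : ℂ) * Q.eval z := by ring
      rw [e1, e2, Complex.normSq_mul, hE, one_mul,
        rot_normSq (Real.cos t) (Real.sin t) (Real.cos_sq_add_sin_sq t),
        Complex.normSq_mul, hz1, one_mul, h1]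
    · intro n hn U hU
      obtain ⟨hP1, hQ1⟩ := hblk n hn U hU
      have hkron : kronI n (gqspR t p 0) * Matrix.fromBlocks U 0 0 1 =
          Matrix.fromBlocks (gqspR t p 0 0 0 • U) (gqspR t p 0 0 1 • (1 : Matrix (Fin n) (Fin n) ℂ))
            (gqspR t p 0 1 0 • U) (gqspR t p 0 1 1 • 1) := by
        simp [kronI, Matrix.fromBlocks_multiply, Matrix.smul_mul]
      constructor
      · show ((kronI n (gqspR t p 0) * Matrix.fromBlocks U 0 0 1) *
            gqspProdM n θ φ l U k).toBlocks₁₁ = _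
        rw [hkron, myBlocks₁₁, hP1, hQ1, map_add, _root_.map_smul, _root_.map_smul, _root_.map_mul, aeval_X]
        simp [smul_mul_assoc]
      · show ((kronI n (gqspR t p 0) * Matrix.fromBlocks U 0 0 1) *
            gqspProdM n θ φ l U k).toBlocks₂₁ = _
        rw [hkron, myBlocks₂₁, hP1, hQ1, map_add, _root_.map_smul, _root_.map_smul, _root_.map_mul, aeval_X]
        simp [smul_mul_assoc]
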